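/- Let D < 0 be an odd fundamental discriminant (D ≡ 1 mod 4, D squarefree). Set λ_D = [[1/2, −1], [(1−D)/4, −1/2]], P = L ∩ λ_D^⊥ and N = L ∩ ℚ·λ_D = ℤ·2λ_D. Then the quotient group L'/(P ⊕ N) is cyclic of order 2|D|, generated by the image of x₀ = [[1/2, 0], [0, −1/2]] ∈ L'. Moreover the orthogonal decomposition of x₀ along (λ_D^⊥) ⊕ ℚλ_D is x₀ = (x₀ − (1/D)·λ_D) + (1/D)·λ_D, i.e. x₀ − (1/D)λ_D satisfies B(x₀ − (1/D)λ_D, λ_D) = 0. -/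

import Mathlib

open Matrix

/-- Membership in the lattice `L` of integral trace-zero 2×2 matrices. -/
def memL (m : Matrix (Fin 2) (Fin 2) ℚ) : Prop :=
  ∃ a b c : ℤ, m = !![(b : ℚ), (c : ℚ); -(a : ℚ), -(b : ℚ)]

/-- Membership in the dual lattice `L'`. -/
def memL' (m : Matrix (Fin 2) (Fin 2) ℚ) : Prop :=
  ∃ a b c : ℤ, m = !![(b : ℚ) / 2, (c : ℚ); -(a : ℚ), -(b : ℚ) / 2]

/-- for an odd fundamental discriminant `D < 0`, with
`λ_D = [[1/2,−1],[(1−D)/4,−1/2]]`, `P = L ∩ λ_D^⊥` and `N = L ∩ ℚλ_D = ℤ·2λ_D`,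
the quotient `L'/(P ⊕ N)` is cyclic of order `2|D|`, generated by the image of
`x₀ = [[1/2,0],[0,−1/2]]`; moreover `x₀ − (1/D)λ_D` is orthogonal to `λ_D`. -/
theorem stmt11 (D : ℤ) (hDneg : D < 0) (hD1 : D % 4 = 1) (hDsf : Squarefree D)
    (lamD x₀ : Matrix (Fin 2) (Fin 2) ℚ)
    (hlamD : lamD = !![(1 : ℚ) / 2, -1; (1 - (D : ℚ)) / 4, -(1 : ℚ) / 2])
    (hx₀def : x₀ = !![(1 : ℚ) / 2, 0; 0, -(1 : ℚ) / 2])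
    (L'grp PNgrp : AddSubgroup (Matrix (Fin 2) (Fin 2) ℚ))
    (hL' : ∀ x, x ∈ L'grp ↔ memL' x)
    (hPN : PNgrp = AddSubgroup.closure
      {x | (memL x ∧ Matrix.trace (x * lamD) = 0) ∨
        ∃ k : ℤ, x = (k : ℚ) • ((2 : ℚ) • lamD)})
    (hx₀ : x₀ ∈ L'grp) :
    (∀ x : Matrix (Fin 2) (Fin 2) ℚ,
      (memL x ∧ ∃ t : ℚ, x = t • lamD) ↔ ∃ k : ℤ, x = (k : ℚ) • ((2 : ℚ) • lamD)) ∧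
    Nat.card (L'grp ⧸ PNgrp.addSubgroupOf L'grp) = 2 * D.natAbs ∧
    (∀ q : L'grp ⧸ PNgrp.addSubgroupOf L'grp,
      ∃ n : ℤ, n • (QuotientAddGroup.mk (⟨x₀, hx₀⟩ : L'grp)) = q) ∧
    Matrix.trace ((x₀ - (D : ℚ)⁻¹ • lamD) * lamD) = 0 := by
  have hD0 : (D : ℚ) ≠ 0 := by
    exact_mod_cast (show D ≠ 0 by omega)
  obtain ⟨M, hDM⟩ : ∃ M : ℤ, D = 1 - 4 * M := ⟨(1 - D) / 4, by omega⟩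
  have hDQ : (D : ℚ) = 1 - 4 * (M : ℚ) := by rw [hDM]; push_cast; ring
  have hlam' : lamD = !![(1 : ℚ) / 2, -1; (M : ℚ), -(1 : ℚ) / 2] := by
    rw [hlamD]
    ext i j
    fin_cases i <;> fin_cases j <;> simp [hDQ] <;> ring
  -- the two generators of P
  set p1 : Matrix (Fin 2) (Fin 2) ℚ := !![(1 : ℚ), 0; 1, -1] with hp1
  set p2 : Matrix (Fin 2) (Fin 2) ℚ := !![(0 : ℚ), 1; (M : ℚ), 0] with hp2
  have hp1mem : p1 ∈ {x : Matrix (Fin 2) (Fin 2) ℚ |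
      (memL x ∧ Matrix.trace (x * lamD) = 0) ∨
        ∃ k : ℤ, x = (k : ℚ) • ((2 : ℚ) • lamD)} := by
    left
    constructor
    · exact ⟨-1, 1, 0, by norm_num [hp1]⟩
    · rw [hp1, hlam']
      norm_num [Matrix.trace_fin_two, Matrix.mul_apply, Fin.sum_univ_two]
  have hp2mem : p2 ∈ {x : Matrix (Fin 2) (Fin 2) ℚ |
      (memL x ∧ Matrix.trace (x * lamD) = 0) ∨
        ∃ k : ℤ, x = (k : ℚ) • ((2 : ℚ) • lamD)} := by
    left
    constructor
    · exact ⟨-M, 0, 1, by push_cast [hp2]; norm_num⟩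
    · rw [hp2, hlam']
      norm_num [Matrix.trace_fin_two, Matrix.mul_apply, Fin.sum_univ_two]
  -- combinations of the generators lie in PN
  have hPNmem : ∀ α β γ : ℤ,
      (α : ℚ) • p1 + (β : ℚ) • p2 + (γ : ℚ) • ((2 : ℚ) • lamD) ∈ PNgrp := by
    intro α β γ
    rw [hPN]
    refine add_mem (add_mem ?_ ?_) ?_
    · have h := zsmul_mem (AddSubgroup.subset_closure hp1mem) α
      rwa [← Int.cast_smul_eq_zsmul ℚ α p1] at h
    · have h := zsmul_mem (AddSubgroup.subset_closure hp2mem) β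
      rwa [← Int.cast_smul_eq_zsmul ℚ β p2] at h
    · exact AddSubgroup.subset_closure (Or.inr ⟨γ, rfl⟩)
  -- the linear functional f
  set f : Matrix (Fin 2) (Fin 2) ℚ → ℚ :=
    fun x => 2 * x 0 0 - 2 * x 1 0 + 2 * (M : ℚ) * x 0 1 with hf
  -- f maps PN into (2D)ℤ
  have hfPN : ∀ x ∈ PNgrp, ∃ t : ℤ, f x = 2 * (D : ℚ) * (t : ℚ) := by
    intro x hx
    rw [hPN] at hx
    induction hx using AddSubgroup.closure_induction with
    | mem x hx =>
      rcases hx with ⟨⟨a, b, c, rfl⟩, htr⟩ | ⟨k, rfl⟩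
      · refine ⟨0, ?_⟩
        rw [hlam'] at htr
        simp [Matrix.trace_fin_two, Matrix.mul_apply, Fin.sum_univ_two] at htr
        simp [hf]
        linear_combination 2 * htr
      · refine ⟨k, ?_⟩
        simp [hf, hlam', hDQ]
        ring
    | zero => exact ⟨0, by simp [hf]⟩
    | add x y hx hy ihx ihy =>
      obtain ⟨t1, h1⟩ := ihx
      obtain ⟨t2, h2⟩ := ihy
      refine ⟨t1 + t2, ?_⟩
      simp only [hf] at h1 h2 ⊢
      push_cast
      simp only [Matrix.add_apply]
      linear_combination h1 + h2
    | neg x hx ihx =>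
      obtain ⟨t, h⟩ := ihx
      refine ⟨-t, ?_⟩
      simp only [hf] at h ⊢
      push_cast
      simp only [Matrix.neg_apply]
      linear_combination -h
  -- kernel computation for multiples of x₀
  have hker : ∀ n : ℤ, ((n : ℚ) • x₀ ∈ PNgrp ↔ (2 * (D.natAbs : ℤ)) ∣ n) := by
    intro n
    constructor
    · intro h
      obtain ⟨t, ht⟩ := hfPN _ h
      have hfx : f ((n : ℚ) • x₀) = (n : ℚ) := by
        simp [hf, hx₀def]
        ring
      rw [hfx] at ht
      have : n = 2 * D * t := by exact_mod_cast ht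
      refine ⟨-t, ?_⟩
      have hNA : (D.natAbs : ℤ) = -D := Int.ofNat_natAbs_of_nonpos (le_of_lt hDneg)
      rw [hNA]; linear_combination this
    · rintro ⟨t, rfl⟩
      have hNA : (D.natAbs : ℤ) = -D := Int.ofNat_natAbs_of_nonpos (le_of_lt hDneg)
      have habs : |(D : ℚ)| = 4 * (M : ℚ) - 1 := by
        rw [abs_of_neg (by exact_mod_cast hDneg : (D : ℚ) < 0), hDQ]; ring
      have key : ((2 * (D.natAbs : ℤ) * t : ℤ) : ℚ) • x₀ =
          ((4 * M * t : ℤ) : ℚ) • p1 + ((-2 * t : ℤ) : ℚ) • p2 +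
            ((-t : ℤ) : ℚ) • ((2 : ℚ) • lamD) := by
        have hNAQ : ((D.natAbs : ℤ) : ℚ) = 4 * (M : ℚ) - 1 := by
          rw [hNA]; push_cast [hDQ]; ring
        ext i j
        fin_cases i <;> fin_cases j <;>
          simp [hx₀def, hp1, hp2, hlam'] <;> push_cast [hNAQ, habs] <;> ring
      rw [key]
      exact hPNmem _ _ _
  -- every element of L' is congruent to a multiple of x₀ modulo PN
  have hgen : ∀ x, memL' x → ∃ n : ℤ, x - (n : ℚ) • x₀ ∈ PNgrp := by
    rintro x ⟨a, b, c, rfl⟩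
    refine ⟨2 * a + b + 2 * M * c, ?_⟩
    have key : !![(b : ℚ) / 2, (c : ℚ); -(a : ℚ), -(b : ℚ) / 2] -
        (((2 * a + b + 2 * M * c : ℤ)) : ℚ) • x₀ =
        ((-(a + M * c) : ℤ) : ℚ) • p1 + ((c : ℤ) : ℚ) • p2 +
          ((0 : ℤ) : ℚ) • ((2 : ℚ) • lamD) := by
      ext i j
      fin_cases i <;> fin_cases j <;>
        simp [hx₀def, hp1, hp2, hlam'] <;> push_cast <;> ring
    rw [key]
    exact hPNmem _ _ _
  -- abbreviations for the quotient
  set K := PNgrp.addSubgroupOf L'grp with hK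
  set g0 : L'grp := ⟨x₀, hx₀⟩ with hg0
  have hmkeq : ∀ (n : ℤ) (y : L'grp),
      (n • (QuotientAddGroup.mk g0 : L'grp ⧸ K) = QuotientAddGroup.mk y) ↔
        (y : Matrix (Fin 2) (Fin 2) ℚ) - (n : ℚ) • x₀ ∈ PNgrp := by
    intro n y
    rw [← QuotientAddGroup.mk_zsmul, QuotientAddGroup.eq, AddSubgroup.mem_addSubgroupOf]
    have hco : ((-(n • g0) + y : L'grp) : Matrix (Fin 2) (Fin 2) ℚ) =
        (y : Matrix (Fin 2) (Fin 2) ℚ) - (n : ℚ) • x₀ := by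
      push_cast [hg0]
      rw [← Int.cast_smul_eq_zsmul ℚ n x₀]
      abel
    rw [hco]
  -- generation statement
  have hgenQ : ∀ q : L'grp ⧸ K,
      ∃ n : ℤ, n • (QuotientAddGroup.mk (⟨x₀, hx₀⟩ : L'grp)) = q := by
    intro q
    induction q using QuotientAddGroup.induction_on with
    | H y =>
      obtain ⟨n, hn⟩ := hgen (y : Matrix (Fin 2) (Fin 2) ℚ) ((hL' _).mp y.2)
      exact ⟨n, (hmkeq n y).mpr hn⟩
  -- the cardinality, via the surjection ℤ → L'/K
  have hcard : Nat.card (L'grp ⧸ K) = 2 * D.natAbs := by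
    set ψ : ℤ →+ (L'grp ⧸ K) := zmultiplesHom _ (QuotientAddGroup.mk g0) with hψ
    have hsurj : Function.Surjective ψ := by
      intro q
      obtain ⟨n, hn⟩ := hgenQ q
      exact ⟨n, by rw [hψ, zmultiplesHom_apply]; exact hn⟩
    have hkerψ : ψ.ker = AddSubgroup.zmultiples ((2 * D.natAbs : ℕ) : ℤ) := by
      ext n
      rw [AddMonoidHom.mem_ker, hψ, zmultiplesHom_apply, Int.mem_zmultiples_iff]
      have h0 : (0 : L'grp ⧸ K) = QuotientAddGroup.mk (0 : L'grp) := rfl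
      rw [h0, hmkeq n 0]
      have : ((0 : L'grp) : Matrix (Fin 2) (Fin 2) ℚ) - (n : ℚ) • x₀ =
          -((n : ℚ) • x₀) := by simp
      rw [this, neg_mem_iff, hker n]
      constructor
      · rintro ⟨t, rfl⟩; exact ⟨t, by push_cast; ring⟩
      · rintro ⟨t, rfl⟩; exact ⟨t, by push_cast; ring⟩
    have e1 : (ℤ ⧸ ψ.ker) ≃+ (L'grp ⧸ K) :=
      QuotientAddGroup.quotientKerEquivOfSurjective ψ hsurj
    rw [← Nat.card_congr e1.toEquiv, hkerψ,
      Nat.card_congr (Int.quotientZMultiplesNatEquivZMod (2 * D.natAbs)).toEquiv,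
      Nat.card_zmod]
  refine ⟨?_, hcard, hgenQ, ?_⟩
  · -- characterization of N = L ∩ ℚλ_D
    intro x
    constructor
    · rintro ⟨⟨a, b, c, rfl⟩, t, ht⟩
      refine ⟨b, ?_⟩
      have h00 : (b : ℚ) = t / 2 := by
        have := congrFun (congrFun ht 0) 0
        simpa [hlam', div_eq_mul_inv] using this
      have ht2 : t = 2 * (b : ℚ) := by rw [h00]; ring
      rw [ht, ht2]
      rw [smul_smul]
      ring_nf
    · rintro ⟨k, rfl⟩
      constructor
      · refine ⟨-(2 * k * M), k, -(2 * k), ?_⟩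
        ext i j
        fin_cases i <;> fin_cases j <;>
          simp [hlam'] <;> push_cast <;> ring
      · exact ⟨2 * (k : ℚ), by rw [smul_smul]; ring_nf⟩
  · -- orthogonality of x₀ - D⁻¹ λ_D and λ_D
    rw [hx₀def, hlam']
    simp [Matrix.trace_fin_two, Matrix.mul_apply, Fin.sum_univ_two, Matrix.sub_apply,
      Matrix.smul_apply]
    field_simp
    linear_combination 2 * hDQ
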